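/- (Interactions between systems without entanglement are conditional transformations on classical degrees of freedom.) Let V, W be finite-dimensional real vector spaces with linear functionals u_V, u_W. Suppose A = convexHull(A₁ ∪ … ∪ A_m) ⊆ V, where the A_i are nonempty compact convex indecomposable subsets with u_V = 1 on each A_i and the family of linear spans of the A_i is linearly independent; similarly B = convexHull(B₁ ∪ … ∪ B_n) ⊆ W with B_j nonempty compact convex indecomposable, u_W = 1 on each B_j, and independent spans. Let T be a linear automorphism of V ⊗ W such that for every i, j and every a ∈ A_i, b ∈ B_j there are linear automorphisms X_b of V and Y_a of W with X_b(A_i) = A_i, Y_a(B_j) = B_j and T(a ⊗ b) = (X_b a) ⊗ (Y_a b), where X_b depends only on b and Y_a only on a. Then for every pair (i, j) there exist linear maps X_{ij} : V → V and Y_{ij} : W → W such that T(a ⊗ b) = (X_{ij} a) ⊗ (Y_{ij} b) for all a ∈ A_i and b ∈ B_j; that is, T acts as a product transformation conditioned only on the classical labels (i, j). -/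

import Mathlib

open scoped TensorProduct

noncomputable section

/-- A state space is decomposable (has a classical degree of freedom) if it is the convex
hull of the union of two nonempty compact convex sets whose linear spans intersect only
in `0`. -/
def Decomposable {V : Type*} [NormedAddCommGroup V] [NormedSpace ℝ V] (S : Set V) : Prop :=
  ∃ S₁ S₂ : Set V, S₁.Nonempty ∧ IsCompact S₁ ∧ Convex ℝ S₁ ∧
    S₂.Nonempty ∧ IsCompact S₂ ∧ Convex ℝ S₂ ∧
    Submodule.span ℝ S₁ ⊓ Submodule.span ℝ S₂ = ⊥ ∧
    S = convexHull ℝ (S₁ ∪ S₂)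

lemma exists_dual_pair {V : Type*} [AddCommGroup V] [Module ℝ V]
    {x1 x2 : V} (h : LinearIndependent ℝ ![x1, x2]) :
    ∃ f g : V →ₗ[ℝ] ℝ, f x1 = 1 ∧ f x2 = 0 ∧ g x1 = 0 ∧ g x2 = 1 := by
  have hli : LinearIndepOn ℝ id (Set.range ![x1, x2]) := (linearIndepOn_id_range_iff h.injective).mpr h
  let b := Module.Basis.extend hli
  have mem1 : x1 ∈ hli.extend (Set.subset_univ _) := hli.subset_extend _ ⟨0, rfl⟩
  have mem2 : x2 ∈ hli.extend (Set.subset_univ _) := hli.subset_extend _ ⟨1, rfl⟩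
  have hne : x1 ≠ x2 := by
    intro e
    have h01 : ![x1, x2] 0 = ![x1, x2] 1 := by simp [e]
    have := h.injective h01
    simp at this
  have r1 : b.repr x1 = Finsupp.single ⟨x1, mem1⟩ 1 := by
    have := congrArg b.repr (Module.Basis.extend_apply_self hli ⟨x1, mem1⟩)
    rw [b.repr_self] at this
    exact this.symm ▸ rfl
  have r2 : b.repr x2 = Finsupp.single ⟨x2, mem2⟩ 1 := by
    have := congrArg b.repr (Module.Basis.extend_apply_self hli ⟨x2, mem2⟩)
    rw [b.repr_self] at this
    exact this.symm ▸ rfl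
  refine ⟨b.coord ⟨x1, mem1⟩, b.coord ⟨x2, mem2⟩, ?_, ?_, ?_, ?_⟩ <;>
    simp [Module.Basis.coord_apply, r1, r2, Finsupp.single_apply, Subtype.ext_iff, hne, hne.symm]

lemma tmul_cancel_left {V W : Type*} [AddCommGroup V] [Module ℝ V]
    [AddCommGroup W] [Module ℝ W] {x1 x2 : V} {y1 y2 : W}
    (h : LinearIndependent ℝ ![x1, x2])
    (heq : x1 ⊗ₜ[ℝ] y1 + x2 ⊗ₜ[ℝ] y2 = 0) : y1 = 0 ∧ y2 = 0 := by
  obtain ⟨f, g, hf1, hf2, hg1, hg2⟩ := exists_dual_pair h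
  constructor
  · have := congrArg (fun z => (TensorProduct.lid ℝ W) (TensorProduct.map f LinearMap.id z)) heq
    simpa [hf1, hf2] using this
  · have := congrArg (fun z => (TensorProduct.lid ℝ W) (TensorProduct.map g LinearMap.id z)) heq
    simpa [hg1, hg2] using this

lemma tmul_cancel_right {V W : Type*} [AddCommGroup V] [Module ℝ V]
    [AddCommGroup W] [Module ℝ W] {x1 x2 : V} {y1 y2 : W}
    (h : LinearIndependent ℝ ![y1, y2])
    (heq : x1 ⊗ₜ[ℝ] y1 + x2 ⊗ₜ[ℝ] y2 = 0) : x1 = 0 ∧ x2 = 0 := by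
  have : y1 ⊗ₜ[ℝ] x1 + y2 ⊗ₜ[ℝ] x2 = 0 := by
    have := congrArg (fun z => (TensorProduct.comm ℝ V W) z) heq
    simpa using this
  exact tmul_cancel_left h this

/-- Interactions between systems without entanglement are conditional transformations on
the classical degrees of freedom: on each block `A_i ⊠ B_j` the interaction acts as a
product transformation `X_{ij} ⊗ Y_{ij}`. -/
theorem interaction_is_conditional_on_classical_labels {V W : Type*}
    [NormedAddCommGroup V] [NormedSpace ℝ V] [FiniteDimensional ℝ V]
    [NormedAddCommGroup W] [NormedSpace ℝ W] [FiniteDimensional ℝ W]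
    (uV : V →ₗ[ℝ] ℝ) (uW : W →ₗ[ℝ] ℝ)
    (m n : ℕ) (A : Fin m → Set V) (B : Fin n → Set W)
    (hA : ∀ i, (A i).Nonempty ∧ IsCompact (A i) ∧ Convex ℝ (A i) ∧ ¬ Decomposable (A i))
    (hB : ∀ j, (B j).Nonempty ∧ IsCompact (B j) ∧ Convex ℝ (B j) ∧ ¬ Decomposable (B j))
    (huV : ∀ i, ∀ a ∈ A i, uV a = 1)
    (huW : ∀ j, ∀ b ∈ B j, uW b = 1)
    (hAind : iSupIndep fun i => Submodule.span ℝ (A i))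
    (hBind : iSupIndep fun j => Submodule.span ℝ (B j))
    (Aset : Set V) (hAset : Aset = convexHull ℝ (⋃ i, A i))
    (Bset : Set W) (hBset : Bset = convexHull ℝ (⋃ j, B j))
    (T : (V ⊗[ℝ] W) ≃ₗ[ℝ] (V ⊗[ℝ] W))
    (X : W → (V ≃ₗ[ℝ] V)) (Y : V → (W ≃ₗ[ℝ] W))
    (hX : ∀ i j, ∀ b ∈ B j, ⇑(X b) '' A i = A i)
    (hY : ∀ i j, ∀ a ∈ A i, ⇑(Y a) '' B j = B j)
    (hT : ∀ i j, ∀ a ∈ A i, ∀ b ∈ B j, T (a ⊗ₜ[ℝ] b) = (X b a) ⊗ₜ[ℝ] (Y a b)) :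
    ∀ i j, ∃ (Xij : V →ₗ[ℝ] V) (Yij : W →ₗ[ℝ] W),
      ∀ a ∈ A i, ∀ b ∈ B j, T (a ⊗ₜ[ℝ] b) = (Xij a) ⊗ₜ[ℝ] (Yij b) := by
  
  intro i j
  obtain ⟨a₀, ha₀⟩ := (hA i).1
  obtain ⟨b₀, hb₀⟩ := (hB j).1
  have hAconv := (hA i).2.2.1
  have hBconv := (hB j).2.2.1
  have memX : ∀ b ∈ B j, ∀ a ∈ A i, X b a ∈ A i := by
    intro b hb a ha
    rw [← hX i j b hb]
    exact Set.mem_image_of_mem _ ha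
  have memY : ∀ a ∈ A i, ∀ b ∈ B j, Y a b ∈ B j := by
    intro a ha b hb
    rw [← hY i j a ha]
    exact Set.mem_image_of_mem _ hb
  -- Claim 1 : Y a b = Y a₀ b
  have claimY : ∀ a ∈ A i, ∀ b ∈ B j, Y a b = Y a₀ b := by
    intro a ha b hb
    set a' : V := (2:ℝ)⁻¹ • a + (2:ℝ)⁻¹ • a₀ with ha'def
    have ha' : a' ∈ A i := hAconv ha ha₀ (by norm_num) (by norm_num) (by norm_num)
    have expand : (a' ⊗ₜ[ℝ] b : V ⊗[ℝ] W)
        = (2:ℝ)⁻¹ • (a ⊗ₜ[ℝ] b) + (2:ℝ)⁻¹ • (a₀ ⊗ₜ[ℝ] b) := by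
      rw [ha'def, TensorProduct.add_tmul, TensorProduct.smul_tmul', TensorProduct.smul_tmul']
    have comb : (X b a') ⊗ₜ[ℝ] (Y a' b)
        = (2:ℝ)⁻¹ • ((X b a) ⊗ₜ[ℝ] (Y a b)) + (2:ℝ)⁻¹ • ((X b a₀) ⊗ₜ[ℝ] (Y a₀ b)) := by
      rw [← hT i j a ha b hb, ← hT i j a₀ ha₀ b hb, ← hT i j a' ha' b hb,
        expand, map_add, map_smul, map_smul]
    have hXa' : X b a' = (2:ℝ)⁻¹ • ((X b a) + (X b a₀)) := by
      rw [ha'def]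
      simp [smul_add]
    have comb2 : ((X b a) + (X b a₀)) ⊗ₜ[ℝ] (Y a' b)
        = (X b a) ⊗ₜ[ℝ] (Y a b) + (X b a₀) ⊗ₜ[ℝ] (Y a₀ b) := by
      apply smul_right_injective (V ⊗[ℝ] W) (by norm_num : (2:ℝ)⁻¹ ≠ 0)
      show (2:ℝ)⁻¹ • _ = (2:ℝ)⁻¹ • _
      rw [TensorProduct.smul_tmul', ← hXa', smul_add]
      exact comb
    have key : (X b a) ⊗ₜ[ℝ] ((Y a' b) - (Y a b)) + (X b a₀) ⊗ₜ[ℝ] ((Y a' b) - (Y a₀ b)) = 0 := by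
      simp only [TensorProduct.tmul_sub, TensorProduct.add_tmul] at comb2 ⊢
      rw [sub_add_sub_comm, sub_eq_zero]
      exact comb2
    by_cases hind : LinearIndependent ℝ ![X b a, X b a₀]
    · obtain ⟨h1, h2⟩ := tmul_cancel_left hind key
      rw [sub_eq_zero] at h1 h2
      rw [← h1, ← h2]
    · have hX0 : X b a₀ ≠ 0 := by
        intro h0
        have h1 := huV i _ (memX b hb a₀ ha₀)
        rw [h0] at h1
        simp at h1
      rw [linearIndependent_fin2] at hind
      push_neg at hind
      simp only [Matrix.cons_val_one, Matrix.head_cons, Matrix.cons_val_zero] at hind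
      obtain ⟨c, hc⟩ := hind hX0
      have hc1 : c = 1 := by
        have h1 := huV i _ (memX b hb a ha)
        have h2 := huV i _ (memX b hb a₀ ha₀)
        have h3 := congrArg uV hc
        simp only [map_smul, smul_eq_mul, h1, h2, mul_one] at h3
        exact h3
      have haa : a = a₀ := by
        apply (X b).injective
        rw [← hc, hc1, one_smul]
      rw [haa]
  -- Claim 2 : X b a = X b₀ a
  have claimX : ∀ b ∈ B j, ∀ a ∈ A i, X b a = X b₀ a := by
    intro b hb a ha
    set b' : W := (2:ℝ)⁻¹ • b + (2:ℝ)⁻¹ • b₀ with hb'def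
    have hb' : b' ∈ B j := hBconv hb hb₀ (by norm_num) (by norm_num) (by norm_num)
    have expand : (a ⊗ₜ[ℝ] b' : V ⊗[ℝ] W)
        = (2:ℝ)⁻¹ • (a ⊗ₜ[ℝ] b) + (2:ℝ)⁻¹ • (a ⊗ₜ[ℝ] b₀) := by
      rw [hb'def, TensorProduct.tmul_add, TensorProduct.tmul_smul, TensorProduct.tmul_smul]
    have comb : (X b' a) ⊗ₜ[ℝ] (Y a b')
        = (2:ℝ)⁻¹ • ((X b a) ⊗ₜ[ℝ] (Y a b)) + (2:ℝ)⁻¹ • ((X b₀ a) ⊗ₜ[ℝ] (Y a b₀)) := by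
      rw [← hT i j a ha b hb, ← hT i j a ha b₀ hb₀, ← hT i j a ha b' hb',
        expand, map_add, map_smul, map_smul]
    have hYb' : Y a b' = (2:ℝ)⁻¹ • ((Y a b) + (Y a b₀)) := by
      rw [hb'def]
      simp [smul_add]
    have comb2 : (X b' a) ⊗ₜ[ℝ] ((Y a b) + (Y a b₀))
        = (X b a) ⊗ₜ[ℝ] (Y a b) + (X b₀ a) ⊗ₜ[ℝ] (Y a b₀) := by
      apply smul_right_injective (V ⊗[ℝ] W) (by norm_num : (2:ℝ)⁻¹ ≠ 0)
      show (2:ℝ)⁻¹ • _ = (2:ℝ)⁻¹ • _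
      rw [← TensorProduct.tmul_smul, ← hYb', smul_add]
      exact comb
    have key : ((X b' a) - (X b a)) ⊗ₜ[ℝ] (Y a b) + ((X b' a) - (X b₀ a)) ⊗ₜ[ℝ] (Y a b₀) = 0 := by
      simp only [TensorProduct.sub_tmul, TensorProduct.tmul_add] at comb2 ⊢
      rw [sub_add_sub_comm, sub_eq_zero]
      exact comb2
    by_cases hind : LinearIndependent ℝ ![Y a b, Y a b₀]
    · obtain ⟨h1, h2⟩ := tmul_cancel_right hind key
      rw [sub_eq_zero] at h1 h2
      rw [← h1, ← h2]
    · have hY0 : Y a b₀ ≠ 0 := by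
        intro h0
        have h1 := huW j _ (memY a ha b₀ hb₀)
        rw [h0] at h1
        simp at h1
      rw [linearIndependent_fin2] at hind
      push_neg at hind
      simp only [Matrix.cons_val_one, Matrix.head_cons, Matrix.cons_val_zero] at hind
      obtain ⟨c, hc⟩ := hind hY0
      have hc1 : c = 1 := by
        have h1 := huW j _ (memY a ha b hb)
        have h2 := huW j _ (memY a ha b₀ hb₀)
        have h3 := congrArg uW hc
        simp only [map_smul, smul_eq_mul, h1, h2, mul_one] at h3
        exact h3
      have hbb : b = b₀ := by
        apply (Y a).injective
        rw [← hc, hc1, one_smul]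
      rw [hbb]
  refine ⟨(X b₀).toLinearMap, (Y a₀).toLinearMap, ?_⟩
  intro a ha b hb
  rw [hT i j a ha b hb, claimY a ha b hb, claimX b hb a ha]
  rfl
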